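/- arXiv:1104.2444 — 2 statements merged into one kernel-verified Lean document; each statement's English description precedes it below -/
import Mathlib

section
/- Let P, N be binary relations on a type V with P⁺ ∘ N irreflexive. Let S ⊆ V and x ∈ V be such that x is not in the domain of P ∪ N (i.e., x is not the first component of any pair in P or N), and let V₀ = S × {x}. Then (P ∪ V₀)⁺ ∘ N is irreflexive. -/
/-- If `P⁺ ∘ N` is irreflexive and `x` is not the first component of any pair
in `P` or `N`, then `(P ∪ (S × {x}))⁺ ∘ N` is irreflexive. -/
theorem irreflexive_transGen_union_comp {V : Type*} (P N : Set (V × V))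
    (S : Set V) (x : V)
    (hirr : ∀ a : V, ¬∃ b, Relation.TransGen (fun u v => (u, v) ∈ P) a b ∧ (b, a) ∈ N)
    (hx : ∀ y, (x, y) ∉ P ∧ (x, y) ∉ N) :
    ∀ a : V, ¬∃ b,
      Relation.TransGen (fun u v => (u, v) ∈ P ∨ (u, v) ∈ S ×ˢ ({x} : Set V)) a b ∧
        (b, a) ∈ N := by
  rintro a ⟨b, htg, hN⟩
  have key : ∀ c d : V,
      Relation.TransGen (fun u v => (u, v) ∈ P ∨ (u, v) ∈ S ×ˢ ({x} : Set V)) c d →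
      Relation.TransGen (fun u v => (u, v) ∈ P) c d ∨ d = x := by
    intro c d h
    induction h with
    | single h =>
      rcases h with h | h
      · exact Or.inl (Relation.TransGen.single h)
      · exact Or.inr h.2
    | tail _ h ih =>
      rcases h with h | h
      · rcases ih with ih | rfl
        · exact Or.inl (ih.tail h)
        · exact absurd h (hx _).1
      · exact Or.inr h.2
  rcases key a b htg with h | rfl
  · exact hirr a ⟨b, h, hN⟩
  · exact (hx a).2 hN
end

section
/- Let P, N be binary relations with P⁺ ∘ N irreflexive and P well-founded, and let x be an element not in the domain of P (not the first component of any P-pair). Let V₀ be any relation whose range is {x} (i.e., V₀ ⊆ V × {x}). Then P⁺ ∘ (N ∪ V₀) is irreflexive. -/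
/-- If `P` is well-founded, `P⁺ ∘ N` is irreflexive, `x` is not the source of
any `P`-edge, and the range of `V₀` is contained in `{x}`, then
`P⁺ ∘ (N ∪ V₀)` is irreflexive. -/
theorem irreflexive_comp_union_range_singleton {V : Type*} (P N V₀ : Set (V × V))
    (x : V)
    (hwf : WellFounded (fun a b => (a, b) ∈ P))
    (hirr : ∀ a : V, ¬∃ b, Relation.TransGen (fun u v => (u, v) ∈ P) a b ∧ (b, a) ∈ N)
    (hx : ∀ y, (x, y) ∉ P)
    (hV₀ : ∀ p ∈ V₀, p.2 = x) :
    ∀ a : V, ¬∃ b, Relation.TransGen (fun u v => (u, v) ∈ P) a b ∧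
      ((b, a) ∈ N ∨ (b, a) ∈ V₀) := by
  rintro a ⟨b, htg, hN | hV⟩
  · exact hirr a ⟨b, htg, hN⟩
  · have ha : a = x := hV₀ _ hV
    subst ha
    obtain ⟨y, h, -⟩ := Relation.TransGen.head'_iff.mp htg
    exact hx _ h
end
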